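/- If A = [[W, H], [J, K]] has rank r with W invertible r×r, then the last p rows of A are obtained from the first r rows by left multiplication by J * W⁻¹: [J K] = (J * W⁻¹) * [W H]. -/

import Mathlib

open Matrix Module Submodule

theorem stmt7 {𝕜 : Type*} [Field 𝕜] {r p q : ℕ}
    (W : Matrix (Fin r) (Fin r) 𝕜) (H : Matrix (Fin r) (Fin q) 𝕜)
    (J : Matrix (Fin p) (Fin r) 𝕜) (K : Matrix (Fin p) (Fin q) 𝕜)
    (hW : IsUnit W) (hA : (Matrix.fromBlocks W H J K).rank = r) :
    Matrix.fromCols J K = (J * W⁻¹) * Matrix.fromCols W H := by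
  classical
  have hWdet : IsUnit W.det := (Matrix.isUnit_iff_isUnit_det W).mp hW
  set A := Matrix.fromBlocks W H J K with hAdef
  set R₁ := Matrix.fromCols W H with hR₁def
  -- rank of R₁ is r
  have hR₁rank : R₁.rank = r := by
    refine le_antisymm (R₁.rank_le_card_height.trans (by simp)) ?_
    have hWR : R₁ * Matrix.fromRows (1 : Matrix (Fin r) (Fin r) 𝕜)
        (0 : Matrix (Fin q) (Fin r) 𝕜) = W := by
      rw [hR₁def, Matrix.fromCols_mul_fromRows]; simp
    calc r = W.rank := by rw [Matrix.rank_of_isUnit W hW, Fintype.card_fin]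
    _ ≤ R₁.rank := by rw [← hWR]; exact Matrix.rank_mul_le_left _ _
  -- row spans
  have hrowA : ∀ i, A (Sum.inl i) = R₁ i := by
    intro i; funext j; cases j <;> rfl
  have hVle : span 𝕜 (Set.range R₁) ≤ span 𝕜 (Set.range A) := by
    apply span_mono
    rintro - ⟨i, rfl⟩
    exact ⟨Sum.inl i, hrowA i⟩
  have hfinA : finrank 𝕜 (span 𝕜 (Set.range A)) = r := by
    have := Matrix.rank_eq_finrank_span_cols Aᵀ
    rw [Matrix.rank_transpose, Matrix.col_transpose, hA] at this
    exact this.symm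
  have hfinR₁ : finrank 𝕜 (span 𝕜 (Set.range R₁)) = r := by
    have := Matrix.rank_eq_finrank_span_cols R₁ᵀ
    rw [Matrix.rank_transpose, Matrix.col_transpose, hR₁rank] at this
    exact this.symm
  haveI : FiniteDimensional 𝕜 (span 𝕜 (Set.range A)) :=
    FiniteDimensional.span_of_finite 𝕜 (Set.finite_range A)
  have hVeq : span 𝕜 (Set.range A) = span 𝕜 (Set.range R₁) :=
    (Submodule.eq_of_le_of_finrank_le hVle (by rw [hfinA, hfinR₁])).symm
  -- key: K = J * W⁻¹ * H
  have hK : K = J * W⁻¹ * H := by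
    ext i j
    have hmem : A (Sum.inr i) ∈ span 𝕜 (Set.range R₁) := by
      rw [← hVeq]; exact subset_span ⟨Sum.inr i, rfl⟩
    replace hmem := (mem_span_range_iff_exists_fun 𝕜).mp hmem
    obtain ⟨c, hc⟩ := hmem
    have hcW : c ᵥ* W = J i := by
      funext l
      have := congrFun hc (Sum.inl l)
      simpa [Matrix.vecMul, dotProduct, hAdef, hR₁def, Matrix.fromCols] using this
    have hcH : (c ᵥ* H) j = K i j := by
      have := congrFun hc (Sum.inr j)
      simpa [Matrix.vecMul, dotProduct, hAdef, hR₁def, Matrix.fromCols] using this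
    have hcval : c = J i ᵥ* W⁻¹ := by
      rw [← hcW, Matrix.vecMul_vecMul, Matrix.mul_nonsing_inv W hWdet, Matrix.vecMul_one]
    rw [← hcH, hcval]
    simp [Matrix.mul_apply, Matrix.vecMul, dotProduct, Finset.sum_mul, mul_assoc]
  rw [Matrix.mul_fromCols, Matrix.nonsing_inv_mul_cancel_right W J hWdet, ← hK]
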